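/- Let S be a Q×Q symmetric matrix with unit diagonal and off-diagonal entries sij with 0 < sij < 1, Q ≥ 4, satisfying the tetrad conditions sih·sjk = sjh·sik for all distinct i,j,h,k. Then there exists a vector λ ∈ ℝ^Q with λi > 0 such that sij = λi·λj for all i ≠ j (namely λi = √(sij·sik/sjk) for any distinct j, k ≠ i, which is well-defined independently of the choice of j, k). -/

import Mathlib

open Matrix

/-- A positive tetrad correlation matrix has rank-one off-diagonal part: there is
a positive vector λ with sij = λi·λj for all i ≠ j. -/
theorem positive_tetrad_matrix_rank_one
    (Q : ℕ) (hQ : 4 ≤ Q) (S : Matrix (Fin Q) (Fin Q) ℝ)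
    (hsym : S.IsSymm) (hdiag : ∀ i, S i i = 1)
    (hoff : ∀ i j, i ≠ j → 0 < S i j ∧ S i j < 1)
    (htetrad : ∀ i j h k : Fin Q, i ≠ j → i ≠ h → i ≠ k → j ≠ h → j ≠ k → h ≠ k →
      S i h * S j k = S j h * S i k) :
    ∃ lam : Fin Q → ℝ, (∀ i, 0 < lam i) ∧ ∀ i j, i ≠ j → S i j = lam i * lam j := by
  have hpos : ∀ i j, i ≠ j → 0 < S i j := fun i j h => (hoff i j h).1
  have hS : ∀ i j, S j i = S i j := fun i j => hsym.apply i j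
  set r : Fin Q → Fin Q → Fin Q → ℝ := fun i j k => S i j * S i k / S j k with hr
  have rpos : ∀ i j k, i ≠ j → i ≠ k → j ≠ k → 0 < r i j k := by
    intro i j k h1 h2 h3
    exact div_pos (mul_pos (hpos i j h1) (hpos i k h2)) (hpos j k h3)
  have swap : ∀ i j k, j ≠ k → r i j k = r i k j := by
    intro i j k h
    simp only [hr, hS k j]
    ring
  have exch : ∀ i j k k', i ≠ j → i ≠ k → i ≠ k' → j ≠ k → j ≠ k' → k ≠ k' →
      r i j k = r i j k' := by
    intro i j k k' h1 h2 h3 h4 h5 h6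
    have ht := htetrad i j k k' h1 h2 h3 h4 h5 h6
    have d1 : S j k ≠ 0 := ne_of_gt (hpos j k h4)
    have d2 : S j k' ≠ 0 := ne_of_gt (hpos j k' h5)
    simp only [hr]
    field_simp
    linear_combination S i j * ht
  have wd : ∀ i j k j' k', i ≠ j → i ≠ k → j ≠ k → i ≠ j' → i ≠ k' → j' ≠ k' →
      r i j k = r i j' k' := by
    intro i j k j' k' h1 h2 h3 h4 h5 h6
    by_cases hkk : k' = k
    · subst hkk
      by_cases hjj : j' = j
      · subst hjj; rfl
      · calc r i j k' = r i k' j := swap i j k' h3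
          _ = r i k' j' := exch i k' j j' h5 h1 h4 (Ne.symm h3) (Ne.symm h6) (Ne.symm hjj)
          _ = r i j' k' := (swap i j' k' h6).symm
    · by_cases hkj : k' = j
      · subst hkj
        by_cases hjk : j' = k
        · subst hjk
          exact swap i k' j' h3
        · calc r i k' k = r i k' j' := exch i k' k j' h1 h2 h4 h3 (Ne.symm h6) (Ne.symm hjk)
            _ = r i j' k' := swap i k' j' (Ne.symm h6)
      · by_cases hjj : j' = j
        · subst hjj
          exact exch i j' k k' h1 h2 h5 h3 h6 (fun h => hkk h.symm)
        · calc r i j k = r i j k' := exch i j k k' h1 h2 h5 h3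
                (fun h => hkj h.symm) (fun h => hkk h.symm)
            _ = r i k' j := swap i j k' (fun h => hkj h.symm)
            _ = r i k' j' := exch i k' j j' h5 h1 h4
                (fun h => hkj h) (Ne.symm h6) (Ne.symm hjj)
            _ = r i j' k' := (swap i j' k' h6).symm
  -- three fixed distinct indices
  have h0 : (0 : ℕ) < Q := by omega
  have h1 : (1 : ℕ) < Q := by omega
  have h2 : (2 : ℕ) < Q := by omega
  set e0 : Fin Q := ⟨0, h0⟩
  set e1 : Fin Q := ⟨1, h1⟩
  set e2 : Fin Q := ⟨2, h2⟩
  have e01 : e0 ≠ e1 := by simp [e0, e1, Fin.ext_iff]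
  have e02 : e0 ≠ e2 := by simp [e0, e2, Fin.ext_iff]
  have e12 : e1 ≠ e2 := by simp [e1, e2, Fin.ext_iff]
  set a : Fin Q → Fin Q := fun i => if i = e0 then e1 else e0 with hadef
  set b : Fin Q → Fin Q := fun i => if i = e0 then e2 else if i = e1 then e2 else e1
    with hbdef
  have hab : ∀ i, i ≠ a i ∧ i ≠ b i ∧ a i ≠ b i := by
    intro i
    by_cases hi0 : i = e0
    · simp [hadef, hbdef, hi0, e01, e02, e12]
    · by_cases hi1 : i = e1
      · have e10 : ¬ e1 = e0 := fun h => e01 h.symm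
        simp [hadef, hbdef, hi0, hi1, e12, e10, e02]
      · simp [hadef, hbdef, hi0, hi1, e01, fun h : i = e0 => hi0 h,
          fun h : i = e1 => hi1 h]
  refine ⟨fun i => Real.sqrt (r i (a i) (b i)), ?_, ?_⟩
  · intro i
    obtain ⟨q1, q2, q3⟩ := hab i
    exact Real.sqrt_pos.mpr (rpos i (a i) (b i) q1 q2 q3)
  · intro i j hij
    -- find k distinct from i and j
    obtain ⟨k, hki, hkj⟩ : ∃ k : Fin Q, k ≠ i ∧ k ≠ j := by
      by_cases c0 : e0 ≠ i ∧ e0 ≠ j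
      · exact ⟨e0, c0⟩
      · by_cases c1 : e1 ≠ i ∧ e1 ≠ j
        · exact ⟨e1, c1⟩
        · rcases not_and_or.mp c0 with h | h <;> rw [not_ne_iff] at h <;>
            rcases not_and_or.mp c1 with h' | h' <;> rw [not_ne_iff] at h'
          · exact absurd (h.trans h'.symm) e01
          · subst h; subst h'; exact ⟨e2, Ne.symm e02, Ne.symm e12⟩
          · subst h; subst h'; exact ⟨e2, Ne.symm e12, Ne.symm e02⟩
          · exact absurd (h.trans h'.symm) e01
    obtain ⟨qi1, qi2, qi3⟩ := hab i
    obtain ⟨qj1, qj2, qj3⟩ := hab j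
    have w1 : r i (a i) (b i) = r i j k :=
      wd i (a i) (b i) j k qi1 qi2 qi3 hij (Ne.symm hki) (Ne.symm hkj)
    have w2 : r j (a j) (b j) = r j i k :=
      wd j (a j) (b j) i k qj1 qj2 qj3 (Ne.symm hij) (Ne.symm hkj) (Ne.symm hki)
    show S i j = Real.sqrt (r i (a i) (b i)) * Real.sqrt (r j (a j) (b j))
    rw [w1, w2, ← Real.sqrt_mul (le_of_lt (rpos i j k hij (hki.symm) (hkj.symm)))]
    have key : r i j k * r j i k = S i j ^ 2 := by
      simp only [hr, hS i j, hS i k, hS j k]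
      have d1 : S i k ≠ 0 := ne_of_gt (hpos i k hki.symm)
      have d2 : S j k ≠ 0 := ne_of_gt (hpos j k hkj.symm)
      field_simp
    rw [key, Real.sqrt_sq (le_of_lt (hpos i j hij))]
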